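/- Let (Λ, {e_i}_{i∈I}) be a Hom-finite K-algebra with enough idempotents. Then for each idempotent e in the family, the endomorphism ring of the right Λ-module eΛ is an Artinian ring, and e is a local object of R(Λ) (i.e. End(eΛ) is local) if and only if e is a primitive idempotent. -/

import Mathlib

noncomputable section

variable (K : Type) [CommRing K]
variable (Λ : Type) [NonUnitalRing Λ] [Module K Λ] [SMulCommClass K Λ Λ] [IsScalarTower K Λ Λ]

/-- `eΛ` (for an idempotent-to-be `e`): the additive subgroup `{x | e * x = x}`. -/
def leftPart (a : Λ) : AddSubgroup Λ where
  carrier := {x | a * x = x}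
  add_mem' := by intro x y hx hy; simp only [Set.mem_setOf_eq] at *; rw [mul_add, hx, hy]
  zero_mem' := by simp
  neg_mem' := by intro x hx; simp only [Set.mem_setOf_eq] at *; rw [mul_neg, hx]

/-- `Λe`: the additive subgroup `{x | x * e = x}`. -/
def rightPart (a : Λ) : AddSubgroup Λ where
  carrier := {x | x * a = x}
  add_mem' := by intro x y hx hy; simp only [Set.mem_setOf_eq] at *; rw [add_mul, hx, hy]
  zero_mem' := by simp
  neg_mem' := by intro x hx; simp only [Set.mem_setOf_eq] at *; rw [neg_mul, hx]

/-- The corner `eΛf = {y | f * y = y ∧ y * e = y}` (morphisms `e → f`), as a `K`-submodule. -/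
def homSubmodule (e f : Λ) : Submodule K Λ where
  carrier := {y | f * y = y ∧ y * e = y}
  add_mem' := by
    rintro a b ⟨ha1, ha2⟩ ⟨hb1, hb2⟩
    exact ⟨by rw [mul_add, ha1, hb1], by rw [add_mul, ha2, hb2]⟩
  zero_mem' := by simp
  smul_mem' := by
    rintro k a ⟨ha1, ha2⟩
    exact ⟨by rw [mul_smul_comm, ha1], by rw [smul_mul_assoc, ha2]⟩

/-- The corner subgroup `{y | e * y = y ∧ y * e = y}` of an idempotent `e`. -/
def cornerSubgroup (e : {x : Λ // x * x = x}) : AddSubgroup Λ where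
  carrier := {y | e.1 * y = y ∧ y * e.1 = y}
  add_mem' := by
    rintro a b ⟨ha1, ha2⟩ ⟨hb1, hb2⟩
    exact ⟨by rw [mul_add, ha1, hb1], by rw [add_mul, ha2, hb2]⟩
  zero_mem' := by simp
  neg_mem' := by
    rintro a ⟨ha1, ha2⟩
    exact ⟨by rw [mul_neg, ha1], by rw [neg_mul, ha2]⟩

/-- The corner ring `eΛe` of an idempotent `e`. -/
def Corner (e : {x : Λ // x * x = x}) : Type := ↥(cornerSubgroup Λ e)

instance (e : {x : Λ // x * x = x}) : AddCommGroup (Corner Λ e) :=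
  inferInstanceAs (AddCommGroup ↥(cornerSubgroup Λ e))

instance (e : {x : Λ // x * x = x}) : Ring (Corner Λ e) :=
  { (inferInstance : AddCommGroup (Corner Λ e)) with
    mul := fun a b => ⟨a.1 * b.1,
      ⟨by rw [← mul_assoc, a.2.1], by rw [mul_assoc, b.2.2]⟩⟩
    one := ⟨e.1, ⟨e.2, e.2⟩⟩
    mul_assoc := fun a b c => Subtype.ext (mul_assoc a.1 b.1 c.1)
    one_mul := fun a => Subtype.ext a.2.1
    mul_one := fun a => Subtype.ext a.2.2
    left_distrib := fun a b c => Subtype.ext (mul_add a.1 b.1 c.1)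
    right_distrib := fun a b c => Subtype.ext (add_mul a.1 b.1 c.1)
    zero_mul := fun a => Subtype.ext (zero_mul a.1)
    mul_zero := fun a => Subtype.ext (mul_zero a.1) }

/-- `e` is a primitive idempotent: it is nonzero and cannot be written as a sum of two nonzero
orthogonal idempotents of `eΛe`. -/
def IsPrimitiveIdem (e : Λ) : Prop :=
  e ≠ 0 ∧ ¬ ∃ f g : Λ, f ≠ 0 ∧ g ≠ 0 ∧ f * f = f ∧ g * g = g ∧ f * g = 0 ∧ g * f = 0 ∧
    f + g = e ∧ e * f = f ∧ f * e = f ∧ e * g = g ∧ g * e = g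


instance (e : {x : Λ // x * x = x}) : SMul K (Corner Λ e) :=
  ⟨fun k a => ⟨k • a.1, by
    obtain ⟨h1, h2⟩ := a.2
    exact ⟨by rw [mul_smul_comm, h1], by rw [smul_mul_assoc, h2]⟩⟩⟩

instance (e : {x : Λ // x * x = x}) : Module K (Corner Λ e) :=
  Function.Injective.module K
    ({ toFun := Subtype.val, map_zero' := rfl, map_add' := fun _ _ => rfl } :
      Corner Λ e →+ Λ)
    Subtype.val_injective (fun _ _ => rfl)

instance (e : {x : Λ // x * x = x}) : IsScalarTower K (Corner Λ e) (Corner Λ e) :=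
  ⟨fun k a b => Subtype.ext (smul_mul_assoc k a.1 b.1)⟩

instance (e : {x : Λ // x * x = x}) : SMulCommClass K (Corner Λ e) (Corner Λ e) :=
  ⟨fun k a b => Subtype.ext (mul_smul_comm k a.1 b.1).symm⟩

/-- The identity as a `K`-linear equivalence from the corner submodule to the corner ring. -/
def cornerEquiv (a : Λ) (ha : a * a = a) :
    ↥(homSubmodule K Λ a a) ≃ₗ[K] Corner Λ ⟨a, ha⟩ where
  toFun x := ⟨x.1, x.2⟩
  invFun y := ⟨y.1, y.2⟩
  left_inv _ := rfl
  right_inv _ := rfl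
  map_add' _ _ := rfl
  map_smul' _ _ := rfl




/-- An Artinian+Noetherian (over `K`) ring with only trivial idempotents is local. -/
theorem isLocalRing_of_no_nontrivial_idem (R : Type) [Ring R] [Nontrivial R]
    [Module K R] [SMulCommClass K R R] [IsScalarTower K R R]
    [IsNoetherian K R] [IsArtinian K R]
    (h : ∀ x : R, x * x = x → x = 0 ∨ x = 1) : IsLocalRing R := by
  suffices hmain : ∀ a : R, IsUnit a ∨ IsUnit (1 - a) by
    refine ⟨fun {a b} hab => ?_⟩
    rcases hmain a with h1 | h1
    · exact Or.inl h1
    · right; rwa [eq_sub_of_add_eq' hab]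
  intro a
  set f := LinearMap.mulLeft K a with hf
  obtain ⟨N, hN⟩ := Filter.eventually_atTop.mp f.eventually_isCompl_ker_pow_range_pow
  have hc := hN (N + 1) (Nat.le_succ N)
  have hfn : f ^ (N + 1) = LinearMap.mulLeft K (a ^ (N + 1)) := LinearMap.pow_mulLeft K R a (N + 1)
  set p := LinearMap.ker (f ^ (N + 1)) with hp
  set q := LinearMap.range (f ^ (N + 1)) with hq
  have hmemp : ∀ x : R, x ∈ p ↔ a ^ (N + 1) * x = 0 := by
    intro x; rw [hp, hfn]; simp [LinearMap.mem_ker]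
  have hmemq : ∀ x : R, x ∈ q ↔ ∃ y, a ^ (N + 1) * y = x := by
    intro x; rw [hq, hfn]; simp [LinearMap.mem_range]
  -- p and q are right ideals
  have hpr : ∀ x y : R, x ∈ p → x * y ∈ p := by
    intro x y hx
    rw [hmemp] at hx ⊢
    rw [← mul_assoc, hx, zero_mul]
  have hqr : ∀ x y : R, x ∈ q → x * y ∈ q := by
    intro x y hx
    rw [hmemq] at hx ⊢
    obtain ⟨z, hz⟩ := hx
    exact ⟨z * y, by rw [← mul_assoc, hz]⟩
  -- decompose 1 = u + v
  obtain ⟨u, hu, v, hv, huv⟩ := Submodule.mem_sup.mp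
    (by rw [codisjoint_iff.mp hc.codisjoint]; trivial : (1 : R) ∈ p ⊔ q)
  -- uniqueness: for x ∈ p, u * x = x; for x ∈ q, u * x = 0
  have hdisj := hc.disjoint
  have key : ∀ x : R, x ∈ p → u * x = x ∧ v * x = 0 := by
    intro x hx
    have h1 : u * x + v * x = x := by rw [← add_mul, huv, one_mul]
    have h2 : u * x - x ∈ p := p.sub_mem (hpr u x hu) hx
    have h3 : u * x - x ∈ q := by
      have : u * x - x = -(v * x) := by linear_combination (norm := abel) h1
      rw [this]; exact q.neg_mem (hqr v x hv)
    have := Submodule.disjoint_def.mp hdisj _ h2 h3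
    constructor
    · linear_combination (norm := abel) this
    · linear_combination (norm := abel) h1 - this
  have key2 : ∀ x : R, x ∈ q → u * x = 0 := by
    intro x hx
    have h1 : u * x + v * x = x := by rw [← add_mul, huv, one_mul]
    have h2 : u * x ∈ p := hpr u x hu
    have h3 : u * x ∈ q := by
      have : u * x = x - v * x := by linear_combination (norm := abel) h1
      rw [this]; exact q.sub_mem hx (hqr v x hv)
    exact Submodule.disjoint_def.mp hdisj _ h2 h3
  have huu : u * u = u := (key u hu).1
  rcases h u huu with h0 | h1
  · -- u = 0 : a is a unit
    left
    have hpbot : ∀ x : R, x ∈ p → x = 0 := by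
      intro x hx
      have := (key x hx).1
      rw [h0, zero_mul] at this; exact this.symm
    have hv1 : v = 1 := by rw [← huv, h0, zero_add]
    obtain ⟨w, hw⟩ := hmemq 1 |>.mp (hv1 ▸ hv)
    -- a * (a^N * w) = 1
    have hright : a * (a ^ N * w) = 1 := by
      rw [← mul_assoc, ← pow_succ' a N, hw]
    have hinj : ∀ x : R, a * x = 0 → x = 0 := by
      intro x hx
      apply hpbot
      rw [hmemp, pow_succ, mul_assoc, hx, mul_zero]
    have hleft : (a ^ N * w) * a = 1 := by
      have : a * ((a ^ N * w) * a - 1) = 0 := by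
        rw [mul_sub, mul_one, ← mul_assoc, hright, one_mul, sub_self]
      have := hinj _ this
      linear_combination (norm := abel) this
    exact ⟨⟨a, a ^ N * w, hright, hleft⟩, rfl⟩
  · -- u = 1 : a is nilpotent, 1 - a is a unit
    right
    have : a ^ (N + 1) = 0 := by
      have := (hmemp u).mp hu
      rw [h1, mul_one] at this; exact this
    exact IsNilpotent.isUnit_one_sub ⟨N + 1, this⟩


/-- Let `(Λ, {e_i})` be a Hom-finite `K`-algebra with enough idempotents.
Then for each `e = e_i`, the endomorphism ring of the right `Λ`-module `eΛ`
(identified with the corner ring `eΛe`) is an Artinian ring, and it is local iff `e` is a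
primitive idempotent. -/
theorem corner_artinian_and_local_iff_primitive
    (I : Type) [DecidableEq I] (e : I → Λ)
    (hidem : ∀ i, e i * e i = e i)
    (horth : ∀ i j, i ≠ j → e i * e j = 0)
    (hdecL : DirectSum.IsInternal fun i => leftPart Λ (e i))
    (hdecR : DirectSum.IsInternal fun i => rightPart Λ (e i))
    (hfin : ∀ i j, IsFiniteLength K ↥(homSubmodule K Λ (e i) (e j)))
    (i : I) :
    IsArtinianRing (Corner Λ ⟨e i, hidem i⟩) ∧
      (IsLocalRing (Corner Λ ⟨e i, hidem i⟩) ↔ IsPrimitiveIdem Λ (e i)) := by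
  have hE := hfin i i
  rw [isFiniteLength_iff_isNoetherian_isArtinian] at hE
  obtain ⟨hNoe, hArt⟩ := hE
  letI : IsNoetherian K (Corner Λ ⟨e i, hidem i⟩) :=
    isNoetherian_of_linearEquiv (cornerEquiv K Λ (e i) (hidem i))
  letI : IsArtinian K (Corner Λ ⟨e i, hidem i⟩) :=
    isArtinian_of_linearEquiv (cornerEquiv K Λ (e i) (hidem i))
  letI : Algebra K (Corner Λ ⟨e i, hidem i⟩) :=
    Algebra.ofModule (fun r x y => smul_mul_assoc r x y) (fun r x y => mul_smul_comm r x y)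
  refine ⟨isArtinian_of_tower K inferInstance, ?_, ?_⟩
  · intro hl
    haveI := hl
    constructor
    · intro h0
      exact one_ne_zero (α := Corner Λ ⟨e i, hidem i⟩) (Subtype.ext h0)
    · rintro ⟨f, g, hf0, hg0, hff, hgg, hfg, hgf, hsum, hef, hfe, heg, hge⟩
      let F : Corner Λ ⟨e i, hidem i⟩ := ⟨f, hef, hfe⟩
      let G : Corner Λ ⟨e i, hidem i⟩ := ⟨g, heg, hge⟩
      have hFG : F + G = 1 := Subtype.ext hsum
      have hFG0 : F * G = 0 := Subtype.ext hfg
      have hGF0 : G * F = 0 := Subtype.ext hgf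
      rcases hl.isUnit_or_isUnit_of_add_one hFG with hU | hU
      · obtain ⟨u, hu⟩ := hU
        have hG : G = 0 := by
          have h1 : (↑u⁻¹ : Corner Λ ⟨e i, hidem i⟩) * (F * G) = G := by
            rw [← mul_assoc, ← hu, Units.inv_mul, one_mul]
          rw [hFG0, mul_zero] at h1
          exact h1.symm
        exact hg0 (congrArg Subtype.val hG)
      · obtain ⟨u, hu⟩ := hU
        have hF : F = 0 := by
          have h1 : (↑u⁻¹ : Corner Λ ⟨e i, hidem i⟩) * (G * F) = F := by
            rw [← mul_assoc, ← hu, Units.inv_mul, one_mul]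
          rw [hGF0, mul_zero] at h1
          exact h1.symm
        exact hf0 (congrArg Subtype.val hF)
  · rintro ⟨hne, hnex⟩
    haveI : Nontrivial (Corner Λ ⟨e i, hidem i⟩) :=
      ⟨⟨1, 0, fun h => hne (congrArg Subtype.val h)⟩⟩
    apply isLocalRing_of_no_nontrivial_idem K
    intro x hx
    by_contra hcon
    push_neg at hcon
    obtain ⟨hx0, hx1⟩ := hcon
    have hxx : x.1 * x.1 = x.1 := congrArg Subtype.val hx
    have hex : e i * x.1 = x.1 := x.2.1
    have hxe : x.1 * e i = x.1 := x.2.2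
    apply hnex
    refine ⟨x.1, e i - x.1, ?_, ?_, hxx, ?_, ?_, ?_, ?_, hex, hxe, ?_, ?_⟩
    · exact fun h => hx0 (Subtype.ext h)
    · intro h
      exact hx1 (Subtype.ext ((sub_eq_zero.mp h).symm))
    · rw [sub_mul, mul_sub, mul_sub, hidem i, hex, hxe, hxx, sub_self, sub_zero]
    · rw [mul_sub, hxe, hxx, sub_self]
    · rw [sub_mul, hex, hxx, sub_self]
    · abel
    · rw [mul_sub, hidem i, hex]
    · rw [sub_mul, hidem i, hxe]

end
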